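/- arXiv:1401.5449 — 3 statements merged into one kernel-verified Lean document; each statement's English description precedes it below -/
import Mathlib

section
/- Let A = Z/m × Z/m and let B ⊆ A be a cyclic subgroup of order m. Then B has a complement B' in A (i.e., A = B × B' internally), B' is cyclic of order m, and the number of distinct such complements B' equals m. -/
open AddSubgroup

variable {m : ℕ}

/-- The lattice order-isomorphism on `AddSubgroup` induced by an `AddEquiv`. -/
@[simps]
def AddEquiv.mapAddSubgroup' {A B : Type*} [AddGroup A] [AddGroup B] (f : A ≃+ B) :
    AddSubgroup A ≃o AddSubgroup B where
  toFun := AddSubgroup.map f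
  invFun := AddSubgroup.map f.symm
  left_inv sg := by simp [AddSubgroup.map_map]
  right_inv sh := by simp [AddSubgroup.map_map]
  map_rel_iff' {sg1 sg2} :=
    ⟨fun h => by simpa [AddSubgroup.map_map] using
      AddSubgroup.map_mono (f := (f.symm : B →+ A)) h, AddSubgroup.map_mono⟩

lemma mem_K [NeZero m] (c : ZMod m) (p : ZMod m × ZMod m) :
    p ∈ zmultiples ((c, 1) : ZMod m × ZMod m) ↔ p.1 = c * p.2 := by
  constructor
  · rintro ⟨k, rfl⟩
    simp [Prod.smul_def, zsmul_eq_mul, mul_comm]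
  · intro h
    refine ⟨(p.2.val : ℤ), ?_⟩
    have : ((p.2.val : ℤ) : ZMod m) = p.2 := by
      push_cast
      simp [ZMod.natCast_val, ZMod.cast_id]
    ext <;> simp [Prod.smul_def, zsmul_eq_mul, this, h, mul_comm]

lemma mem_B0 [NeZero m] (p : ZMod m × ZMod m) :
    p ∈ zmultiples ((1, 0) : ZMod m × ZMod m) ↔ p.2 = 0 := by
  constructor
  · rintro ⟨k, rfl⟩
    simp [Prod.smul_def]
  · intro h
    refine ⟨(p.1.val : ℤ), ?_⟩
    have : ((p.1.val : ℤ) : ZMod m) = p.1 := by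
      push_cast
      simp [ZMod.natCast_val, ZMod.cast_id]
    ext <;> simp [Prod.smul_def, zsmul_eq_mul, this, h]

lemma isAddCyclic_zmultiples {A : Type*} [AddGroup A] (g : A) :
    IsAddCyclic (zmultiples g) := by
  refine ⟨⟨⟨g, mem_zmultiples g⟩, ?_⟩⟩
  rintro ⟨x, k, rfl⟩
  exact ⟨k, by ext; simp⟩

lemma card_K [NeZero m] (c : ZMod m) :
    Nat.card (zmultiples ((c, 1) : ZMod m × ZMod m)) = m := by
  rw [Nat.card_zmultiples]
  refine Nat.dvd_antisymm ?_ ?_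
  · apply addOrderOf_dvd_of_nsmul_eq_zero
    ext <;> simp [Prod.smul_def, nsmul_eq_mul, ZMod.natCast_self]
  · have h := addOrderOf_nsmul_eq_zero ((c, 1) : ZMod m × ZMod m)
    have h2 : addOrderOf ((c, 1) : ZMod m × ZMod m) • (1 : ZMod m) = 0 := by
      have := congrArg Prod.snd h
      simpa using this
    have := addOrderOf_dvd_of_nsmul_eq_zero h2
    rwa [ZMod.addOrderOf_one] at this

lemma isCompl_K [NeZero m] (c : ZMod m) :
    IsCompl (zmultiples ((1, 0) : ZMod m × ZMod m)) (zmultiples ((c, 1) : ZMod m × ZMod m)) := by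
  constructor
  · rw [AddSubgroup.disjoint_def]
    intro p hp hp'
    rw [mem_B0] at hp
    rw [mem_K] at hp'
    ext <;> simp [hp, hp']
  · rw [codisjoint_iff, eq_top_iff]
    intro p _
    rw [AddSubgroup.mem_sup]
    refine ⟨(p.1 - c * p.2, 0), ?_, (c * p.2, p.2), ?_, ?_⟩
    · rw [mem_B0]
    · rw [mem_K]
    · ext <;> simp

lemma compl_eq_K [NeZero m] (B' : AddSubgroup (ZMod m × ZMod m))
    (h : IsCompl (zmultiples ((1, 0) : ZMod m × ZMod m)) B') :
    ∃ c : ZMod m, B' = zmultiples ((c, 1) : ZMod m × ZMod m) := by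
  have htop : zmultiples ((1, 0) : ZMod m × ZMod m) ⊔ B' = ⊤ := codisjoint_iff.mp h.codisjoint
  have h1 : ((0, 1) : ZMod m × ZMod m) ∈ zmultiples ((1, 0) : ZMod m × ZMod m) ⊔ B' := by
    rw [htop]; trivial
  rw [AddSubgroup.mem_sup] at h1
  obtain ⟨y, hy, z, hz, hyz⟩ := h1
  rw [mem_B0] at hy
  have hz2 : z.2 = 1 := by
    have := congrArg Prod.snd hyz
    simpa [hy] using this
  refine ⟨z.1, le_antisymm ?_ ?_⟩
  · intro p hp
    rw [mem_K]
    have hq : p - p.2.val • z ∈ B' := sub_mem hp (nsmul_mem hz p.2.val)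
    have hqB0 : p - p.2.val • z ∈ zmultiples ((1, 0) : ZMod m × ZMod m) := by
      rw [mem_B0]
      simp [Prod.smul_def, hz2, nsmul_eq_mul, ZMod.natCast_val, ZMod.cast_id]
    have hq0 : p - p.2.val • z = 0 := by
      exact (AddSubgroup.disjoint_def.mp h.disjoint) hqB0 hq
    have h1' := congrArg Prod.fst hq0
    have : p.1 - (p.2.val : ZMod m) * z.1 = 0 := by
      simpa [Prod.smul_def, nsmul_eq_mul] using h1'
    rw [ZMod.natCast_val, ZMod.cast_id] at this
    rw [sub_eq_zero] at this
    rw [this, mul_comm]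
  · rintro p ⟨k, rfl⟩
    have hzeq : z = (z.1, 1) := by ext <;> simp [hz2]
    rw [← hzeq]
    exact zsmul_mem hz k

lemma K_inj [NeZero m] {c c' : ZMod m}
    (h : zmultiples ((c, 1) : ZMod m × ZMod m) = zmultiples ((c', 1) : ZMod m × ZMod m)) :
    c = c' := by
  have h1 : ((c, 1) : ZMod m × ZMod m) ∈ zmultiples ((c', 1) : ZMod m × ZMod m) := by
    rw [← h]; exact mem_zmultiples _
  rw [mem_K] at h1
  simpa using h1

lemma exists_bezout (hm : 0 < m) (x y : ZMod m)
    (hb : addOrderOf ((x, y) : ZMod m × ZMod m) = m) :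
    ∃ a c : ZMod m, a * x + c * y = 1 := by
  haveI : NeZero m := ⟨hm.ne'⟩
  set X := x.val with hX
  set Y := y.val with hY
  have hxval : ((X : ℕ) : ZMod m) = x := by simp [hX, ZMod.natCast_val, ZMod.cast_id]
  have hyval : ((Y : ℕ) : ZMod m) = y := by simp [hY, ZMod.natCast_val, ZMod.cast_id]
  set d := Nat.gcd X (Nat.gcd Y m) with hd
  have hdX : d ∣ X := Nat.gcd_dvd_left _ _
  have hdY : d ∣ Y := (Nat.gcd_dvd_right X _).trans (Nat.gcd_dvd_left Y m)
  have hdm : d ∣ m := (Nat.gcd_dvd_right X _).trans (Nat.gcd_dvd_right Y m)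
  have key : ∀ (Z : ℕ) (z : ZMod m), ((Z : ℕ) : ZMod m) = z → d ∣ Z → (m / d) • z = 0 := by
    intro Z z hz hdZ
    have hmul : (m / d) * Z = m * (Z / d) := by
      calc (m / d) * Z = (m / d) * (d * (Z / d)) := by rw [Nat.mul_div_cancel' hdZ]
        _ = ((m / d) * d) * (Z / d) := by ring
        _ = m * (Z / d) := by rw [Nat.div_mul_cancel hdm]
    have : (((m / d) * Z : ℕ) : ZMod m) = 0 := by
      rw [hmul]; push_cast; simp [ZMod.natCast_self]
    rw [← hz, nsmul_eq_mul, ← Nat.cast_mul, this]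
  have hsmul : (m / d) • ((x, y) : ZMod m × ZMod m) = 0 := by
    ext
    · exact key X x hxval hdX
    · exact key Y y hyval hdY
  have hdvd : m ∣ m / d := by
    have := addOrderOf_dvd_of_nsmul_eq_zero hsmul
    rwa [hb] at this
  have hdiv : m / d = m := Nat.dvd_antisymm (Nat.div_dvd_of_dvd hdm) hdvd
  have hd1 : d = 1 := by
    rcases (Nat.div_eq_self.mp hdiv) with h | h
    · omega
    · exact h
  set G := Nat.gcd Y m with hG
  have e1 : (1 : ℤ) = X * Nat.gcdA X G + G * Nat.gcdB X G := by
    have := Nat.gcd_eq_gcd_ab X G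
    rw [show X.gcd G = 1 from hd1] at this
    simpa using this
  have e2 : (G : ℤ) = Y * Nat.gcdA Y m + m * Nat.gcdB Y m := Nat.gcd_eq_gcd_ab Y m
  rw [e2] at e1
  have e4 := congrArg (fun z : ℤ => (z : ZMod m)) e1
  push_cast at e4
  rw [hxval, hyval] at e4
  simp [ZMod.natCast_self] at e4
  refine ⟨((Nat.gcdA X G : ℤ) : ZMod m), ((Nat.gcdA Y m * Nat.gcdB X G : ℤ) : ZMod m), ?_⟩
  push_cast
  linear_combination -e4

/-- The linear automorphism with matrix `[[x, -c], [y, a]]` of determinant `a*x + c*y = 1`. -/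
def mkE (x y a c : ZMod m) (h : a * x + c * y = 1) :
    (ZMod m × ZMod m) ≃+ (ZMod m × ZMod m) where
  toFun p := (x * p.1 - c * p.2, y * p.1 + a * p.2)
  invFun p := (a * p.1 + c * p.2, -(y * p.1) + x * p.2)
  left_inv p := by
    ext
    · show a * (x * p.1 - c * p.2) + c * (y * p.1 + a * p.2) = p.1
      linear_combination p.1 * h
    · show -(y * (x * p.1 - c * p.2)) + x * (y * p.1 + a * p.2) = p.2
      linear_combination p.2 * h
  right_inv p := by
    ext
    · show x * (a * p.1 + c * p.2) - c * (-(y * p.1) + x * p.2) = p.1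
      linear_combination p.1 * h
    · show y * (a * p.1 + c * p.2) + a * (-(y * p.1) + x * p.2) = p.2
      linear_combination p.2 * h
  map_add' p q := by
    ext
    · show x * (p.1 + q.1) - c * (p.2 + q.2) = (x * p.1 - c * p.2) + (x * q.1 - c * q.2)
      ring
    · show y * (p.1 + q.1) + a * (p.2 + q.2) = (y * p.1 + a * p.2) + (y * q.1 + a * q.2)
      ring

lemma mkE_one_zero (x y a c : ZMod m) (h : a * x + c * y = 1) :
    mkE x y a c h (1, 0) = (x, y) := by
  show (x * 1 - c * 0, y * 1 + a * 0) = (x, y)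
  ext <;> simp

/-- A cyclic subgroup `B` of order `m` in `A = ZMod m × ZMod m` has a complement `B'`
(`A = B × B'` internally), any such complement is cyclic of order `m`, and the number of
distinct complements of `B` equals `m`. -/
theorem stmt3 (m : ℕ) (hm : 0 < m) (B : AddSubgroup (ZMod m × ZMod m))
    (hBcyc : IsAddCyclic B) (hBcard : Nat.card B = m) :
    (∃ B' : AddSubgroup (ZMod m × ZMod m), IsCompl B B') ∧
    (∀ B' : AddSubgroup (ZMod m × ZMod m), IsCompl B B' →
      IsAddCyclic B' ∧ Nat.card B' = m) ∧
    Nat.card {B' : AddSubgroup (ZMod m × ZMod m) // IsCompl B B'} = m := by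
  haveI : NeZero m := ⟨hm.ne'⟩
  obtain ⟨g, hg⟩ := hBcyc
  have hBg : B = zmultiples (g : ZMod m × ZMod m) := by
    apply le_antisymm
    · intro v hv
      obtain ⟨k, hk⟩ := hg ⟨v, hv⟩
      exact ⟨k, congrArg Subtype.val hk⟩
    · rintro v ⟨k, rfl⟩
      exact zsmul_mem g.2 k
  have hord : addOrderOf (g : ZMod m × ZMod m) = m := by
    rw [← Nat.card_zmultiples, ← hBg]
    exact hBcard
  obtain ⟨a, c, hac⟩ := exists_bezout hm (g : ZMod m × ZMod m).1 (g : ZMod m × ZMod m).2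
    (by rw [Prod.mk.eta]; exact hord)
  set e := mkE (g : ZMod m × ZMod m).1 (g : ZMod m × ZMod m).2 a c hac with he
  set φ := e.mapAddSubgroup' with hφdef
  have hmapB : φ (zmultiples ((1, 0) : ZMod m × ZMod m)) = B := by
    show AddSubgroup.map (e : (ZMod m × ZMod m) →+ (ZMod m × ZMod m))
      (zmultiples ((1, 0) : ZMod m × ZMod m)) = B
    rw [AddMonoidHom.map_zmultiples]
    have : (e : (ZMod m × ZMod m) →+ (ZMod m × ZMod m)) ((1, 0) : ZMod m × ZMod m)
        = (g : ZMod m × ZMod m) := by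
      show e ((1, 0) : ZMod m × ZMod m) = (g : ZMod m × ZMod m)
      rw [he, mkE_one_zero, Prod.mk.eta]
    rw [this, ← hBg]
  have hφ : ∀ T, IsCompl (zmultiples ((1, 0) : ZMod m × ZMod m)) T ↔ IsCompl B (φ T) := by
    intro T
    conv_rhs => rw [← hmapB]
    exact OrderIso.isCompl_iff φ
  have classify : ∀ B' : AddSubgroup (ZMod m × ZMod m), IsCompl B B' →
      ∃ c' : ZMod m, B' = φ (zmultiples ((c', 1) : ZMod m × ZMod m)) := by
    intro B' hB'
    have hT : IsCompl (zmultiples ((1, 0) : ZMod m × ZMod m)) (φ.symm B') := by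
      rw [hφ (φ.symm B'), φ.apply_symm_apply]
      exact hB'
    obtain ⟨c', hc'⟩ := compl_eq_K (φ.symm B') hT
    exact ⟨c', by rw [← hc', φ.apply_symm_apply]⟩
  refine ⟨⟨φ (zmultiples ((0, 1) : ZMod m × ZMod m)), (hφ _).mp (isCompl_K 0)⟩, ?_, ?_⟩
  · intro B' hB'
    obtain ⟨c', rfl⟩ := classify B' hB'
    haveI : IsAddCyclic (zmultiples ((c', 1) : ZMod m × ZMod m)) := _root_.isAddCyclic_zmultiples _
    have equiv : (zmultiples ((c', 1) : ZMod m × ZMod m)) ≃+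
        AddSubgroup.map (e : (ZMod m × ZMod m) →+ (ZMod m × ZMod m))
          (zmultiples ((c', 1) : ZMod m × ZMod m)) :=
      AddSubgroup.equivMapOfInjective _ _ e.injective
    constructor
    · exact isAddCyclic_of_surjective equiv.toAddMonoidHom equiv.surjective
    · rw [show (φ (zmultiples ((c', 1) : ZMod m × ZMod m)) : AddSubgroup (ZMod m × ZMod m))
        = AddSubgroup.map (e : (ZMod m × ZMod m) →+ (ZMod m × ZMod m))
          (zmultiples ((c', 1) : ZMod m × ZMod m)) from rfl]
      rw [← Nat.card_congr equiv.toEquiv]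
      exact card_K c'
  · have eqv : ZMod m ≃ {B' : AddSubgroup (ZMod m × ZMod m) // IsCompl B B'} := by
      refine Equiv.ofBijective
        (fun c' => ⟨φ (zmultiples ((c', 1) : ZMod m × ZMod m)), (hφ _).mp (isCompl_K c')⟩)
        ⟨?_, ?_⟩
      · intro c₁ c₂ h
        have := φ.injective (congrArg Subtype.val h)
        exact K_inj this
      · rintro ⟨B', hB'⟩
        obtain ⟨c', hc'⟩ := classify B' hB'
        exact ⟨c', Subtype.ext hc'.symm⟩
    rw [← Nat.card_congr eqv]
    simp
end

section
/- Fix a uniformizer π of a non-archimedean local field F with unit group U. The assignment η ↦ X_η, where X_η(π^a ε₁, π^b ε₂) := η(ε₁)^b · η(ε₂)^{-a}, defines a bijection between characters η of U and U-isotropic alternating characters X on F^× (those with X(U,U) ≡ 1), with inverse X ↦ η_X, η_X(ε) := X(ε, π). Moreover this bijection does not depend on the choice of uniformizer π. -/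
/- We model `F^× ≅ ⟨π⟩ × U` as `Multiplicative ℤ × U`, where `U` is the unit group.
A uniformizer is an element whose first component (its valuation) is `1`. -/

/-- The unit part of `x` with respect to a uniformizer `π`: the `U`-component of
`x · π^{-v(x)}`. -/
def unitPart {U : Type*} [CommGroup U] (π x : Multiplicative ℤ × U) : U :=
  (x * π ^ (-(Multiplicative.toAdd x.1))).2

/-- The alternating character `X_η` attached to a character `η` of `U`:
`X_η(π^a ε₁, π^b ε₂) = η(ε₁)^b · η(ε₂)^{-a}`. -/
def Xeta {U : Type*} [CommGroup U] (π : Multiplicative ℤ × U) (η : U →* ℂˣ)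
    (x y : Multiplicative ℤ × U) : ℂˣ :=
  η (unitPart π x) ^ Multiplicative.toAdd y.1 *
    (η (unitPart π y) ^ Multiplicative.toAdd x.1)⁻¹

/-- `X` is a `U`-isotropic alternating character: bimultiplicative, alternating, and
trivial on `U × U`. -/
def IsUIsotropicAlt {U : Type*} [CommGroup U]
    (X : Multiplicative ℤ × U → Multiplicative ℤ × U → ℂˣ) : Prop :=
  (∀ x y z, X (x * y) z = X x z * X y z) ∧
  (∀ x y z, X x (y * z) = X x y * X x z) ∧
  (∀ x, X x x = 1) ∧
  (∀ u v : U, X (1, u) (1, v) = 1)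

lemma snd_zpow' {G H : Type*} [Group G] [Group H] (x : G × H) (n : ℤ) :
    (x ^ n).2 = x.2 ^ n := rfl

lemma aux_calc {G : Type*} [CommGroup G] (p q r : G) (a b : ℤ) :
    (p * q ^ (-a)) ^ b * ((r * q ^ (-b)) ^ a)⁻¹ = p ^ b * (r ^ a)⁻¹ := by
  rw [← zpow_neg (r * q ^ (-b)), mul_zpow, mul_zpow, mul_mul_mul_comm,
    ← zpow_mul, ← zpow_mul, ← zpow_add]
  have h : -a * b + -b * -a = 0 := by ring
  rw [h, zpow_zero, mul_one, zpow_neg]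

lemma Xeta_eq {U : Type*} [CommGroup U] (π : Multiplicative ℤ × U) (η : U →* ℂˣ)
    (x y : Multiplicative ℤ × U) :
    Xeta π η x y = η x.2 ^ Multiplicative.toAdd y.1 *
      (η y.2 ^ Multiplicative.toAdd x.1)⁻¹ := by
  simp only [Xeta, unitPart, Prod.snd_mul, snd_zpow', map_mul, map_zpow]
  exact aux_calc _ _ _ _ _

/-- For a fixed uniformizer `π`, the map `η ↦ X_η` is a bijection from characters of `U`
onto `U`-isotropic alternating characters, with inverse `X ↦ η_X`, `η_X(ε) = X(ε, π)`;
moreover `X_η` does not depend on the choice of uniformizer. -/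
theorem stmt10 {U : Type*} [CommGroup U] (π : Multiplicative ℤ × U)
    (hπ : π.1 = Multiplicative.ofAdd 1) :
    (∀ η : U →* ℂˣ, IsUIsotropicAlt (Xeta π η)) ∧
    (∀ η₁ η₂ : U →* ℂˣ, Xeta π η₁ = Xeta π η₂ → η₁ = η₂) ∧
    (∀ X, IsUIsotropicAlt X →
      ∃ η : U →* ℂˣ, (∀ u : U, η u = X (1, u) π) ∧ Xeta π η = X) ∧
    (∀ π' : Multiplicative ℤ × U, π'.1 = Multiplicative.ofAdd 1 →
      ∀ η : U →* ℂˣ, Xeta π η = Xeta π' η) := by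
  refine ⟨?_, ?_, ?_, ?_⟩
  · -- Xeta is a U-isotropic alternating character
    intro η
    refine ⟨?_, ?_, ?_, ?_⟩
    · intro x y z
      simp only [Xeta_eq, Prod.snd_mul, Prod.fst_mul, toAdd_mul, map_mul, mul_zpow]
      simp [zpow_add, zpow_sub, mul_comm, mul_assoc, mul_left_comm]
    · intro x y z
      simp only [Xeta_eq, Prod.snd_mul, Prod.fst_mul, toAdd_mul, map_mul, mul_zpow]
      simp [zpow_add, zpow_sub, mul_comm, mul_assoc, mul_left_comm]
    · intro x
      rw [Xeta_eq, mul_inv_cancel]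
    · intro u v
      simp [Xeta_eq]
  · -- injectivity
    intro η₁ η₂ h
    refine MonoidHom.ext fun u => ?_
    have := congrFun (congrFun h (1, u)) π
    simpa [Xeta_eq, hπ] using this
  · -- surjectivity
    intro X hX
    obtain ⟨h1, h2, halt, hU⟩ := hX
    -- X x 1 = 1 and X 1 y = 1
    have hx1 : ∀ x, X x 1 = 1 := fun x => by
      have e := h2 x 1 1
      rw [one_mul] at e
      exact (mul_eq_left.mp e.symm)
    have h1y : ∀ y, X 1 y = 1 := fun y => by
      have e := h1 1 1 y
      rw [one_mul] at e
      exact (mul_eq_left.mp e.symm)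
    -- zpow lemmas
    have hr : ∀ x y (n : ℤ), X x (y ^ n) = X x y ^ n := by
      intro x y n
      exact map_zpow (MonoidHom.mk' (X x) (h2 x)) y n
    have hl : ∀ x y (n : ℤ), X (x ^ n) y = X x y ^ n := by
      intro x y n
      exact map_zpow (MonoidHom.mk' (fun x => X x y) (fun a b => h1 a b y)) x n
    -- skew symmetry
    have hskew : ∀ x y, X y x = (X x y)⁻¹ := by
      intro x y
      have e : (1 : ℂˣ) = X x y * X y x := by
        calc (1 : ℂˣ) = X (x * y) (x * y) := (halt _).symm
        _ = X x x * X x y * (X y x * X y y) := by rw [h1, h2, h2]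
        _ = X x y * X y x := by rw [halt, halt, one_mul, mul_one]
      exact eq_inv_of_mul_eq_one_right (by rw [← e])
    -- the character η
    have hmul : ∀ u v : U, X (1, u * v) π = X (1, u) π * X (1, v) π := by
      intro u v
      have : ((1, u * v) : Multiplicative ℤ × U) = (1, u) * (1, v) := by
        simp [Prod.ext_iff]
      rw [this, h1]
    refine ⟨MonoidHom.mk' (fun u => X (1, u) π) hmul, fun u => rfl, ?_⟩
    funext x y
    -- decompose x = π ^ a * (1, unitPart π x)
    have hdec : ∀ z : Multiplicative ℤ × U,
        z = π ^ (Multiplicative.toAdd z.1) * (1, unitPart π z) := by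
      intro z
      have h1' : (π ^ (Multiplicative.toAdd z.1)).1 = z.1 := by
        show π.1 ^ (Multiplicative.toAdd z.1) = z.1
        rw [hπ]
        rw [← ofAdd_toAdd z.1]
        rw [← ofAdd_zsmul]
        simp
      refine Prod.ext ?_ ?_
      · simp [Prod.fst_mul, h1']
      · show z.2 = (π ^ (Multiplicative.toAdd z.1)).2 * unitPart π z
        rw [unitPart, Prod.snd_mul, snd_zpow', snd_zpow']
        rw [zpow_neg]
        simp [mul_comm, mul_left_comm, mul_assoc]

    set a := Multiplicative.toAdd x.1 with ha
    set b := Multiplicative.toAdd y.1 with hb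
    have key : X x y = X (1, unitPart π x) π ^ b * (X (1, unitPart π y) π ^ a)⁻¹ := by
      conv_lhs => rw [hdec x, hdec y]
      rw [h1, h2, h2, hl, hl, hr, hr, halt π, hU, one_zpow, one_zpow, mul_one,
        hskew (1, unitPart π y) π]
      rw [inv_zpow, one_mul, mul_comm]
    rw [key]
    rfl
  · -- independence of uniformizer
    intro π' hπ' η
    funext x y
    rw [Xeta_eq, Xeta_eq]
end

section
/- For a character η of U of finite order #η, the radical of the alternating character X_η (defined by X_η(π^a ε₁, π^b ε₂) = η(ε₁)^b η(ε₂)^{-a}) equals ⟨π^{#η}⟩ × Ker(η), and consequently F^×/Rad(X_η) ≅ Z/#η × Z/#η. -/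
open Multiplicative

lemma snd_zpow'_s11 {U : Type*} [CommGroup U] (p : Multiplicative ℤ × U) (m : ℤ) :
    (p ^ m).2 = p.2 ^ m := rfl

lemma fst_zpow' {U : Type*} [CommGroup U] (p : Multiplicative ℤ × U) (m : ℤ) :
    (p ^ m).1 = p.1 ^ m := rfl

lemma unitPart_eq {U : Type*} [CommGroup U] (π x : Multiplicative ℤ × U) :
    unitPart π x = x.2 * π.2 ^ (-(toAdd x.1)) := by
  rw [unitPart, Prod.snd_mul, snd_zpow'_s11]

lemma unitPart_mul {U : Type*} [CommGroup U] (π x y : Multiplicative ℤ × U) :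
    unitPart π (x * y) = unitPart π x * unitPart π y := by
  simp only [unitPart_eq, Prod.fst_mul, toAdd_mul, Prod.snd_mul, neg_add, zpow_add]
  simp [mul_comm, mul_assoc, mul_left_comm]

lemma unitPart_one_mk {U : Type*} [CommGroup U] (π : Multiplicative ℤ × U) (v : U) :
    unitPart π ((1 : Multiplicative ℤ), v) = v := by
  simp [unitPart_eq]

lemma fst_piPow_mul {U : Type*} [CommGroup U] (π : Multiplicative ℤ × U)
    (hπ : π.1 = Multiplicative.ofAdd 1) (m : ℤ) (u : U) :
    (π ^ m * ((1 : Multiplicative ℤ), u)).1 = Multiplicative.ofAdd m := by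
  rw [Prod.fst_mul, fst_zpow', hπ]
  show ofAdd 1 ^ m * 1 = ofAdd m
  rw [mul_one, ← ofAdd_zsmul, smul_eq_mul, mul_one]

lemma toAdd_fst_piPow_mul {U : Type*} [CommGroup U] (π : Multiplicative ℤ × U)
    (hπ : π.1 = Multiplicative.ofAdd 1) (m : ℤ) (u : U) :
    toAdd (π ^ m * ((1 : Multiplicative ℤ), u)).1 = m := by
  rw [fst_piPow_mul π hπ, toAdd_ofAdd]

lemma unitPart_piPow_mul {U : Type*} [CommGroup U] (π : Multiplicative ℤ × U)
    (hπ : π.1 = Multiplicative.ofAdd 1) (m : ℤ) (u : U) :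
    unitPart π (π ^ m * ((1 : Multiplicative ℤ), u)) = u := by
  rw [unitPart_eq, toAdd_fst_piPow_mul π hπ, Prod.snd_mul, snd_zpow'_s11]
  show π.2 ^ m * u * π.2 ^ (-m) = u
  rw [zpow_neg, mul_comm (π.2 ^ m) u, mul_assoc, mul_inv_cancel, mul_one]

/-- For `η` of finite order `n = #η`, the radical of `X_η` is `⟨π^{#η}⟩ × Ker(η)`, and
`F^×/Rad(X_η) ≅ Z/#η × Z/#η`. -/
theorem stmt11 {U : Type*} [CommGroup U] (π : Multiplicative ℤ × U)
    (hπ : π.1 = Multiplicative.ofAdd 1) (η : U →* ℂˣ) (n : ℕ) (hn : 0 < n)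
    (hord : orderOf η = n) :
    ∃ R : Subgroup (Multiplicative ℤ × U),
      (∀ x, x ∈ R ↔ ∀ y, Xeta π η x y = 1) ∧
      (∀ x, x ∈ R ↔ ∃ (k : ℤ) (u : U), η u = 1 ∧ x = π ^ ((n : ℤ) * k) * (1, u)) ∧
      Nonempty (((Multiplicative ℤ × U) ⧸ R) ≃* Multiplicative (ZMod n × ZMod n)) := by
  haveI : NeZero n := ⟨hn.ne'⟩
  have hη_pow : ∀ u, η u ^ n = 1 := by
    intro u
    have h1 : η ^ n = 1 := by rw [← hord, pow_orderOf_eq_one]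
    have := DFunLike.congr_fun h1 u
    simpa using this
  set μ : Subgroup ℂˣ := rootsOfUnity n ℂ with hμ
  have hcardμ : Nat.card μ = n := by
    exact Complex.card_rootsOfUnity n
  set η' : U →* μ := η.codRestrict μ (fun u => (mem_rootsOfUnity n (η u)).2 (hη_pow u)) with hη'
  have hη'_coe : ∀ u, (η' u : ℂˣ) = η u := fun u => rfl
  -- surjectivity of η'
  have hsurj : Function.Surjective η' := by
    rw [← MonoidHom.range_eq_top]
    have hdvd : Nat.card η'.range ∣ n := by
      rw [← hcardμ]; exact Subgroup.card_subgroup_dvd_card η'.range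
    have hd : ∀ u, η u ^ Nat.card η'.range = 1 := by
      intro u
      have h1 : (⟨η' u, ⟨u, rfl⟩⟩ : η'.range) ^ Nat.card η'.range = 1 := pow_card_eq_one'
      have h2 : (η' u) ^ Nat.card η'.range = 1 := by
        have := congrArg (Subtype.val) h1
        simpa using this
      have := congrArg (Subtype.val) h2
      simpa [hη'_coe] using this
    have hnd : n ∣ Nat.card η'.range := by
      rw [← hord]
      apply orderOf_dvd_of_pow_eq_one
      ext u
      exact_mod_cast hd u
    have hceq : Nat.card η'.range = Nat.card μ := by
      rw [hcardμ]; exact Nat.dvd_antisymm hdvd hnd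
    exact Subgroup.eq_top_of_card_eq _ hceq
  -- the homomorphism f
  set f : (Multiplicative ℤ × U) →* Multiplicative (ZMod n) × μ :=
    MonoidHom.mk' (fun x => (Multiplicative.ofAdd (((toAdd x.1 : ℤ) : ZMod n)), η' (unitPart π x)))
      (by
        intro a b
        refine Prod.ext ?_ ?_
        · show ofAdd (((toAdd (a.1 * b.1) : ℤ) : ZMod n)) = ofAdd _ * ofAdd _
          rw [← ofAdd_add, toAdd_mul]
          push_cast
          ring_nf
        · show η' (unitPart π (a * b)) = η' (unitPart π a) * η' (unitPart π b)
          rw [unitPart_mul, map_mul]) with hf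
  have hfx : ∀ x, f x =
      (Multiplicative.ofAdd (((toAdd x.1 : ℤ) : ZMod n)), η' (unitPart π x)) := fun _ => rfl
  have hη'one : ∀ w, η' w = 1 ↔ η w = 1 := by
    intro w
    rw [Subtype.ext_iff, OneMemClass.coe_one, hη'_coe]
  have hker : ∀ x, f x = 1 ↔ ((n : ℤ) ∣ toAdd x.1 ∧ η (unitPart π x) = 1) := by
    intro x
    rw [hfx, Prod.mk_eq_one, ofAdd_eq_one, ZMod.intCast_zmod_eq_zero_iff_dvd, hη'one]
  refine ⟨f.ker, ?_, ?_, ?_⟩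
  · -- radical characterization
    intro x
    rw [MonoidHom.mem_ker, hker]
    constructor
    · rintro ⟨⟨k, hk⟩, h2⟩ y
      rw [Xeta, h2, one_zpow, one_mul, hk]
      have : η (unitPart π y) ^ ((n : ℤ) * k) = 1 := by
        rw [zpow_mul]
        norm_cast
        rw [hη_pow, one_zpow]
      rw [this, inv_one]
    · intro h
      have ha : η (unitPart π x) = 1 := by
        have hp := h π
        have hππ : unitPart π π = 1 := by
          rw [unitPart_eq, hπ, toAdd_ofAdd, zpow_neg, zpow_one, mul_inv_cancel]
        rw [Xeta, hππ, map_one, one_zpow, inv_one, mul_one, hπ, toAdd_ofAdd, zpow_one] at hp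
        exact hp
      refine ⟨?_, ha⟩
      have hv : ∀ v, η v ^ (toAdd x.1) = 1 := by
        intro v
        have hp := h ((1 : Multiplicative ℤ), v)
        rw [Xeta, unitPart_one_mk] at hp
        simp only [toAdd_one, zpow_zero, one_mul] at hp
        have : (η v ^ toAdd x.1)⁻¹ = 1 := by simpa using hp
        rwa [inv_eq_one] at this
      have : η ^ (toAdd x.1) = 1 := by
        refine MonoidHom.ext fun v => ?_
        simpa using hv v
      have := (orderOf_dvd_iff_zpow_eq_one (G := U →* ℂˣ)).2 this
      rwa [hord] at this
  · -- kernel characterization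
    intro x
    rw [MonoidHom.mem_ker, hker]
    constructor
    · rintro ⟨⟨k, hk⟩, h2⟩
      refine ⟨k, unitPart π x, h2, ?_⟩
      refine Prod.ext ?_ ?_
      · rw [fst_piPow_mul π hπ, ← hk, ofAdd_toAdd]
      · rw [Prod.snd_mul, snd_zpow'_s11, unitPart_eq]
        show x.2 = π.2 ^ ((n : ℤ) * k) * (x.2 * π.2 ^ (-(toAdd x.1)))
        rw [← hk, zpow_neg, mul_comm x.2, ← mul_assoc, mul_inv_cancel, one_mul]
    · rintro ⟨k, u, hu, rfl⟩
      constructor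
      · rw [toAdd_fst_piPow_mul π hπ]
        exact ⟨k, rfl⟩
      · rw [unitPart_piPow_mul π hπ, hu]
  · -- quotient isomorphism
    have e1 := QuotientGroup.quotientKerEquivOfSurjective f (by
      rintro ⟨c, w⟩
      obtain ⟨u, hu⟩ := hsurj w
      refine ⟨π ^ ((toAdd c).val : ℤ) * ((1 : Multiplicative ℤ), u), ?_⟩
      rw [hfx, unitPart_piPow_mul π hπ, toAdd_fst_piPow_mul π hπ, hu]
      congr 1
      push_cast
      rw [ZMod.natCast_val, ZMod.cast_id, ofAdd_toAdd])
    have e2 : Multiplicative (ZMod n) ≃* μ := hcardμ ▸ zmodCyclicMulEquiv inferInstance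
    exact ⟨(e1.trans (MulEquiv.prodCongr (MulEquiv.refl _) e2.symm)).trans
      (MulEquiv.prodMultiplicative (ZMod n) (ZMod n)).symm⟩
end
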